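/- Let Ω = {a,b,c,d} and let P be the set of four probability measures μ1 = (1/4,1/4,1/4,1/4), μ2 = (0,1/8,3/8,1/2), μ3 = (1/8,3/8,0,1/2), μ4 = (3/8,0,1/8,1/2) (values on a,b,c,d respectively, extended additively). Fix ε with 0 < ε < 1/8, and define υ_ε(X) = P^*(X) + ε if X = {a,b,c} and υ_ε(X) = P^*(X) otherwise. Then there is no nonempty set P' of probability measures on Ω such that υ_ε(X) = sup{μ(X) : μ ∈ P'} for every X ⊆ Ω. -/

import Mathlib

open Set

def IsProb {Ω : Type*} (μ : Set Ω → ℝ) : Prop :=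
  μ ∅ = 0 ∧ μ Set.univ = 1 ∧ (∀ A : Set Ω, 0 ≤ μ A ∧ μ A ≤ 1) ∧
    ∀ A B : Set Ω, Disjoint A B → μ (A ∪ B) = μ A + μ B

open Classical in
noncomputable def pm (w : Fin 4 → ℝ) (X : Set (Fin 4)) : ℝ :=
  ∑ x : Fin 4, if x ∈ X then w x else 0

noncomputable def upstar (X : Set (Fin 4)) : ℝ :=
  max (max (pm (fun _ => 1/4) X) (pm ![0, 1/8, 3/8, 1/2] X))
      (max (pm ![1/8, 3/8, 0, 1/2] X) (pm ![3/8, 0, 1/8, 1/2] X))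

open Classical in
noncomputable def upsEps (ε : ℝ) (X : Set (Fin 4)) : ℝ :=
  if X = ({0, 1, 2} : Set (Fin 4)) then upstar X + ε else upstar X

lemma fne01 : (0:Fin 4) ≠ 1 := by decide
lemma fne02 : (0:Fin 4) ≠ 2 := by decide
lemma fne10 : (1:Fin 4) ≠ 0 := by decide
lemma fne12 : (1:Fin 4) ≠ 2 := by decide
lemma fne20 : (2:Fin 4) ≠ 0 := by decide
lemma fne21 : (2:Fin 4) ≠ 1 := by decide
lemma fne30 : (3:Fin 4) ≠ 0 := by decide
lemma fne31 : (3:Fin 4) ≠ 1 := by decide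
lemma fne32 : (3:Fin 4) ≠ 2 := by decide

lemma nm3_012 : (3:Fin 4) ∉ ({0,1,2} : Set (Fin 4)) := by
  simp only [Set.mem_insert_iff, Set.mem_singleton_iff]; decide
lemma nm2_01 : (2:Fin 4) ∉ ({0,1} : Set (Fin 4)) := by
  simp only [Set.mem_insert_iff, Set.mem_singleton_iff]; decide
lemma nm3_01 : (3:Fin 4) ∉ ({0,1} : Set (Fin 4)) := by
  simp only [Set.mem_insert_iff, Set.mem_singleton_iff]; decide
lemma nm1_02 : (1:Fin 4) ∉ ({0,2} : Set (Fin 4)) := by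
  simp only [Set.mem_insert_iff, Set.mem_singleton_iff]; decide
lemma nm3_02 : (3:Fin 4) ∉ ({0,2} : Set (Fin 4)) := by
  simp only [Set.mem_insert_iff, Set.mem_singleton_iff]; decide
lemma nm0_12 : (0:Fin 4) ∉ ({1,2} : Set (Fin 4)) := by
  simp only [Set.mem_insert_iff, Set.mem_singleton_iff]; decide
lemma nm3_12 : (3:Fin 4) ∉ ({1,2} : Set (Fin 4)) := by
  simp only [Set.mem_insert_iff, Set.mem_singleton_iff]; decide

lemma upstar012 : upstar ({0,1,2} : Set (Fin 4)) = 3/4 := by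
  norm_num [upstar, pm, Fin.sum_univ_four, Set.mem_insert_iff, Set.mem_singleton_iff, nm3_012, Matrix.cons_val_two, Matrix.tail_cons, Matrix.head_cons, fne01, fne02, fne10, fne12, fne20, fne21, fne30, fne31, fne32]

lemma upstar01 : upstar ({0,1} : Set (Fin 4)) = 1/2 := by
  norm_num [upstar, pm, Fin.sum_univ_four, Set.mem_insert_iff, Set.mem_singleton_iff, nm2_01, nm3_01, fne01, fne02, fne10, fne12, fne20, fne21, fne30, fne31, fne32]

lemma upstar02 : upstar ({0,2} : Set (Fin 4)) = 1/2 := by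
  norm_num [upstar, pm, Fin.sum_univ_four, Set.mem_insert_iff, Set.mem_singleton_iff, nm1_02, nm3_02, Matrix.cons_val_two, Matrix.tail_cons, Matrix.head_cons, fne01, fne02, fne10, fne12, fne20, fne21, fne30, fne31, fne32]

lemma upstar12 : upstar ({1,2} : Set (Fin 4)) = 1/2 := by
  norm_num [upstar, pm, Fin.sum_univ_four, Set.mem_insert_iff, Set.mem_singleton_iff, nm0_12, nm3_12, Matrix.cons_val_two, Matrix.tail_cons, Matrix.head_cons, fne01, fne02, fne10, fne12, fne20, fne21, fne30, fne31, fne32]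

lemma ne012 {X : Set (Fin 4)} (h : (2 : Fin 4) ∉ X) : X ≠ ({0,1,2} : Set (Fin 4)) := by
  intro hX
  exact h (hX ▸ (by simp : (2 : Fin 4) ∈ ({0,1,2} : Set (Fin 4))))

theorem upsEps_not_upper_probability (ε : ℝ) (hε : 0 < ε) (hε' : ε < 1/8) :
    ¬ ∃ P' : Set (Set (Fin 4) → ℝ), P'.Nonempty ∧ (∀ μ ∈ P', IsProb μ) ∧
      ∀ X : Set (Fin 4), upsEps ε X = sSup ((fun μ => μ X) '' P') := by
  rintro ⟨P', hne, hprob, hsup⟩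
  have hbdd : ∀ X : Set (Fin 4), BddAbove ((fun μ => μ X) '' P') := fun X =>
    ⟨1, by rintro y ⟨μ, hμ, rfl⟩; exact ((hprob μ hμ).2.2.1 X).2⟩
  -- find μ with μ {0,1,2} > 3/4
  have h012 : upsEps ε ({0,1,2} : Set (Fin 4)) = 3/4 + ε := by
    rw [upsEps, if_pos rfl, upstar012]
  have hlt : (3:ℝ)/4 < sSup ((fun μ => μ ({0,1,2} : Set (Fin 4))) '' P') := by
    rw [← hsup, h012]; linarith
  obtain ⟨y, hy, hy'⟩ := exists_lt_of_lt_csSup (hne.image _) hlt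
  obtain ⟨μ, hμ, rfl⟩ := hy
  have hle : ∀ X : Set (Fin 4), μ X ≤ upsEps ε X := fun X => by
    rw [hsup X]; exact le_csSup (hbdd X) ⟨μ, hμ, rfl⟩
  have h01 : μ ({0,1} : Set (Fin 4)) ≤ 1/2 := by
    have := hle ({0,1} : Set (Fin 4))
    rwa [upsEps, if_neg (ne012 (by simp [Fin.ext_iff])), upstar01] at this
  have h02 : μ ({0,2} : Set (Fin 4)) ≤ 1/2 := by
    have := hle ({0,2} : Set (Fin 4))
    rwa [upsEps, if_neg (by
      intro hX
      have : (1 : Fin 4) ∈ ({0,2} : Set (Fin 4)) := hX ▸ (by simp)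
      simpa [Fin.ext_iff] using this), upstar02] at this
  have h12 : μ ({1,2} : Set (Fin 4)) ≤ 1/2 := by
    have := hle ({1,2} : Set (Fin 4))
    rwa [upsEps, if_neg (by
      intro hX
      have : (0 : Fin 4) ∈ ({1,2} : Set (Fin 4)) := hX ▸ (by simp)
      simpa [Fin.ext_iff] using this), upstar12] at this
  have hadd := (hprob μ hμ).2.2.2
  have d0_12 : Disjoint ({0} : Set (Fin 4)) {1,2} := by
    simp [Set.disjoint_left, Fin.ext_iff]
  have d1_2 : Disjoint ({1} : Set (Fin 4)) {2} := by
    simp [Set.disjoint_left, Fin.ext_iff]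
  have d0_1 : Disjoint ({0} : Set (Fin 4)) {1} := by
    simp [Set.disjoint_left, Fin.ext_iff]
  have d0_2 : Disjoint ({0} : Set (Fin 4)) {2} := by
    simp [Set.disjoint_left, Fin.ext_iff]
  have e12 : μ ({1,2} : Set (Fin 4)) = μ {1} + μ {2} := by
    have := hadd {1} {2} d1_2
    rwa [Set.singleton_union] at this
  have e012 : μ ({0,1,2} : Set (Fin 4)) = μ {0} + μ {1} + μ {2} := by
    have := hadd {0} {1,2} d0_12
    rw [Set.singleton_union] at this
    rw [this, e12]; ring
  have e01 : μ ({0,1} : Set (Fin 4)) = μ {0} + μ {1} := by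
    have := hadd {0} {1} d0_1
    rwa [Set.singleton_union] at this
  have e02 : μ ({0,2} : Set (Fin 4)) = μ {0} + μ {2} := by
    have := hadd {0} {2} d0_2
    rwa [Set.singleton_union] at this
  have hy2 : (3:ℝ)/4 < μ {0} + μ {1} + μ {2} := by
    have : (3:ℝ)/4 < μ ({0,1,2} : Set (Fin 4)) := hy'
    linarith [this, e012.symm.le, e012.le]
  rw [e01] at h01
  rw [e02] at h02
  rw [e12] at h12
  linarith
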